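/- arXiv:math/9803091 — 4 statements merged into one kernel-verified Lean document; each statement's English description precedes it below -/
import Mathlib

section
/- Schur's lemma for the Fock representation: every ℚ-linear endomorphism T of R that commutes with multiplication by q_m for every m ≥ 1 and commutes with the partial derivative ∂/∂q_m for every m ≥ 1 is a scalar multiple of the identity, i.e. there exists c ∈ ℚ with T = c·id_R. -/
open MvPolynomial

lemma coeff_pderiv' {σ : Type*} [DecidableEq σ] (i : σ) (p : MvPolynomial σ ℚ)
    (t : σ →₀ ℕ) :
    coeff t (pderiv i p) = (t i + 1 : ℚ) * coeff (t + Finsupp.single i 1) p := by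
  induction p using MvPolynomial.induction_on' with
  | monomial u a =>
    rw [pderiv_monomial, coeff_monomial, coeff_monomial]
    by_cases h : u = t + Finsupp.single i 1
    · have hui : u i = t i + 1 := by simp [h]
      have : u - Finsupp.single i 1 = t := by
        ext j
        by_cases hj : j = i <;> simp [h, hj, Finsupp.single_apply]
      simp [this, h, hui]; ring
    · simp only [h, if_neg h, mul_zero]
      by_cases h2 : u - Finsupp.single i 1 = t
      · have : u i = 0 := by
          by_contra hui
          apply h
          ext j
          by_cases hj : j = i
          · subst hj
            have := DFunLike.congr_fun h2 j
            simp [Finsupp.single_apply] at this ⊢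
            omega
          · have hij : i ≠ j := fun h => hj h.symm
            have := DFunLike.congr_fun h2 j
            simp [Finsupp.single_apply, hij] at this ⊢
            omega
        simp [h2, this]
      · simp [h2]
  | add p q hp hq =>
    simp [hp, hq, mul_add]

lemma eq_C_of_pderiv_zero (p : MvPolynomial ℕ+ ℚ) (h : ∀ i, pderiv i p = 0) :
    p = C (coeff 0 p) := by
  ext s
  rcases eq_or_ne s 0 with rfl | hs
  · simp
  · obtain ⟨i, hi⟩ : ∃ i, s i ≠ 0 := by
      by_contra hc
      push_neg at hc
      exact hs (Finsupp.ext fun i => hc i)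
    have key := coeff_pderiv' i p (s - Finsupp.single i 1)
    rw [h i] at key
    have hi' : 1 ≤ s i := Nat.one_le_iff_ne_zero.mpr hi
    have hst : s - Finsupp.single i 1 + Finsupp.single i 1 = s := by
      ext j
      by_cases hj : j = i
      · subst hj; simp [Finsupp.single_apply]; omega
      · have hij : i ≠ j := fun h => hj h.symm
        simp [Finsupp.single_apply, hij]
    rw [hst] at key
    have : coeff s p = 0 := by
      rcases mul_eq_zero.mp key.symm with h1 | h1
      · exact absurd h1 (Nat.cast_add_one_ne_zero _)
      · exact h1
    simp [this, coeff_C, Ne.symm hs]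

theorem schur_fock (T : MvPolynomial ℕ+ ℚ →ₗ[ℚ] MvPolynomial ℕ+ ℚ)
    (hmul : ∀ (m : ℕ+) (p : MvPolynomial ℕ+ ℚ), T (X m * p) = X m * T p)
    (hder : ∀ (m : ℕ+) (p : MvPolynomial ℕ+ ℚ), T (pderiv m p) = pderiv m (T p)) :
    ∃ c : ℚ, T = c • LinearMap.id := by
  set c := coeff 0 (T 1) with hc
  have hT1 : T 1 = C c := by
    apply eq_C_of_pderiv_zero
    intro i
    rw [← hder i 1]
    simp
  refine ⟨c, ?_⟩
  refine LinearMap.ext fun p => ?_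
  show T p = c • p
  induction p using MvPolynomial.induction_on with
  | C a =>
    have h1 : (C a : MvPolynomial ℕ+ ℚ) = a • 1 := by
      rw [smul_eq_C_mul, mul_one]
    rw [h1, map_smul, hT1, smul_comm]
    congr 1
    rw [smul_eq_C_mul, mul_one]
  | add p q hp hq => rw [map_add, hp, hq, smul_add]
  | mul_X p n hp => rw [mul_comm, hmul, hp, mul_smul_comm, mul_comm]
end

section
/- Virasoro–Heisenberg commutation (Fock-space form of Theorem: [𝔏_n(α),𝔮_m(β)] = −m·𝔮_{n+m}(αβ)): for all integers n and m, L_n ∘ a_m − a_m ∘ L_n = −m · a_{n+m}. -/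
/- Fock space model: `R = ℚ[q₁,q₂,…]` with oscillator operators `aₙ`
(`aₙ = qₙ·` for `n > 0`, `aₙ = −∂₋ₙ`, `a₀ = 0`) and Virasoro operators
`Lₙ = (1/2)·Σ_{i+j=n, i,j≥1} aᵢ∘aⱼ + Σ_{k≥1} a_{n+k}∘a_{−k}` for `n > 0`,
`Lₙ = (1/2)·Σ_{i+j=−n, i,j≥1} a_{−i}∘a_{−j} + Σ_{k≥1} a_k∘a_{n−k}` for `n < 0`,
`L₀ = Σ_{k≥1} a_k∘a_{−k}`; the locally finite sums over `k` are realized by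
truncating at a bound beyond which all summands vanish on the given polynomial. -/

open MvPolynomial

noncomputable section

abbrev R : Type := MvPolynomial ℕ+ ℚ

/-- The variable `q_k` (zero for `k = 0`). -/
def q (k : ℕ) : R := if h : 0 < k then X (⟨k, h⟩ : ℕ+) else 0

/-- Multiplication by `q_k` as a `ℚ`-linear operator. -/
def mulQ (k : ℕ) : Module.End ℚ R := LinearMap.mulLeft ℚ (q k)

/-- The operator `∂ₘ = m·(∂/∂qₘ)`. -/
def pd (m : ℕ) : Module.End ℚ R :=
  if h : 0 < m then (m : ℚ) • (pderiv (⟨m, h⟩ : ℕ+)).toLinearMap else 0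

/-- The oscillator operators. -/
def a : ℤ → Module.End ℚ R := fun n =>
  if 0 < n then mulQ n.toNat
  else if n < 0 then -pd (-n).toNat
  else 0

/-- A bound on the indices of variables occurring in `p`; any annihilation
operator `a₋ₖ` with `k` beyond this bound kills `p`. -/
def bnd (p : R) : ℕ := p.vars.sup (fun i => (i : ℕ))

/-- The Virasoro operators `Lₙ`. -/
def L (n : ℤ) : R → R := fun p =>
  if 0 < n then
    (1 / 2 : ℚ) • (∑ i ∈ Finset.Ioo (0 : ℤ) n, (a i * a (n - i)) p)
      + ∑ k ∈ Finset.Icc 1 (bnd p), (a (n + (k : ℤ)) * a (-(k : ℤ))) p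
  else if n < 0 then
    (1 / 2 : ℚ) • (∑ i ∈ Finset.Ioo (0 : ℤ) (-n), (a (-i) * a (n + i)) p)
      + ∑ k ∈ Finset.Icc 1 (bnd p), (a (k : ℤ) * a (n - (k : ℤ))) p
  else ∑ k ∈ Finset.Icc 1 (bnd p), (a (k : ℤ) * a (-(k : ℤ))) p

lemma a_pos' {i : ℤ} (h : 0 < i) : a i = mulQ i.toNat := by simp [a, h]
lemma a_neg' {i : ℤ} (h : i < 0) : a i = -pd (-i).toNat := by
  simp [a, h, not_lt.mpr h.le]
lemma a_zero' : a 0 = 0 := by simp [a]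

lemma pderiv_pderiv_comm (i j : ℕ+) (p : R) :
    pderiv i (pderiv j p) = pderiv j (pderiv i p) := by
  induction p using MvPolynomial.induction_on with
  | C c => simp [pderiv_C]
  | add f g hf hg => simp [hf, hg]
  | mul_X f k hf =>
    rcases eq_or_ne i j with rfl | hij
    · rfl
    · simp only [pderiv_mul, map_add, hf]
      rcases eq_or_ne k i with rfl | hki <;> rcases eq_or_ne k j with rfl | hkj <;>
        simp_all [pderiv_X_self, pderiv_X_of_ne, pderiv_C]

lemma mulQ_comm (i j : ℕ) : mulQ i * mulQ j = mulQ j * mulQ i := by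
  unfold mulQ
  rw [Module.End.mul_eq_comp, Module.End.mul_eq_comp, ← LinearMap.mulLeft_mul,
    ← LinearMap.mulLeft_mul, mul_comm]

lemma pd_comm (i j : ℕ) : pd i * pd j = pd j * pd i := by
  rcases Nat.eq_zero_or_pos i with rfl | h1
  · simp [pd]
  rcases Nat.eq_zero_or_pos j with rfl | h2
  · simp [pd]
  simp only [pd, dif_pos h1, dif_pos h2]
  refine LinearMap.ext fun p => ?_
  show (i:ℚ) • (pderiv ⟨i,h1⟩ ((j:ℚ) • pderiv ⟨j,h2⟩ p))
      = (j:ℚ) • (pderiv ⟨j,h2⟩ ((i:ℚ) • pderiv ⟨i,h1⟩ p))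
  have key : ∀ I J : ℕ+, (i:ℚ) • (pderiv I ((j:ℚ) • pderiv J p))
      = (j:ℚ) • (pderiv J ((i:ℚ) • pderiv I p)) := by
    intro I J
    rw [Derivation.map_smul, Derivation.map_smul, pderiv_pderiv_comm, smul_comm]
  exact key _ _

lemma pd_mulQ (k i : ℕ) (hk : 0 < k) (hi : 0 < i) :
    pd k * mulQ i - mulQ i * pd k = if i = k then (k : ℚ) • (1 : Module.End ℚ R) else 0 := by
  simp only [pd, dif_pos hk, mulQ, q, dif_pos hi]
  rcases eq_or_ne i k with rfl | hik
  · rw [if_pos rfl]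
    refine LinearMap.ext fun p => ?_
    show (i:ℚ) • pderiv ⟨i,hk⟩ (X ⟨i,hi⟩ * p) - X ⟨i,hi⟩ * ((i:ℚ) • pderiv ⟨i,hk⟩ p)
        = (i:ℚ) • p
    have key : ∀ I : ℕ+, (i:ℚ) • pderiv I (X I * p) - X I * ((i:ℚ) • pderiv I p)
        = (i:ℚ) • p := by
      intro I
      rw [pderiv_mul, pderiv_X_self]
      rw [smul_add, mul_smul_comm, one_mul]
      abel
    exact key _
  · rw [if_neg hik]
    refine LinearMap.ext fun p => ?_
    show (k:ℚ) • pderiv ⟨k,hk⟩ (X ⟨i,hi⟩ * p) - X ⟨i,hi⟩ * ((k:ℚ) • pderiv ⟨k,hk⟩ p) = 0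
    have key : ∀ I K : ℕ+, I ≠ K →
        (k:ℚ) • pderiv K (X I * p) - X I * ((k:ℚ) • pderiv K p) = 0 := by
      intro I K hne
      rw [pderiv_mul, pderiv_X_of_ne hne]
      rw [smul_add, mul_smul_comm, zero_mul, smul_zero, zero_add]
      abel
    exact key ⟨i, hi⟩ ⟨k, hk⟩ (fun h => hik (congrArg Subtype.val h))

lemma a_comm (i j : ℤ) :
    a i * a j - a j * a i = if i + j = 0 then (i : ℚ) • (1 : Module.End ℚ R) else 0 := by
  rcases lt_trichotomy 0 i with hi | hi | hi
  rotate_left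
  · rw [← hi, a_zero', zero_mul, mul_zero, sub_self]
    rcases eq_or_ne j 0 with rfl | hj
    · simp
    · rw [if_neg (by omega)]
  rotate_left
  all_goals rcases lt_trichotomy 0 j with hj | hj | hj
  · rw [a_pos' hi, a_pos' hj, mulQ_comm, sub_self, if_neg (by omega)]
  · rw [← hj, a_zero', zero_mul, mul_zero, sub_self, if_neg (by omega)]
  · rw [a_pos' hi, a_neg' hj,
      show mulQ i.toNat * -pd (-j).toNat - -pd (-j).toNat * mulQ i.toNat
          = pd (-j).toNat * mulQ i.toNat - mulQ i.toNat * pd (-j).toNat from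
        LinearMap.ext fun p => by
          simp only [LinearMap.sub_apply, Module.End.mul_apply, LinearMap.neg_apply, map_neg]
          abel]
    rw [pd_mulQ (-j).toNat i.toNat (by omega) (by omega)]
    by_cases h : i + j = 0
    · rw [if_pos (by omega), if_pos h]; congr 1
      exact_mod_cast congrArg (Int.cast : ℤ → ℚ) (show ((-j).toNat : ℤ) = i by omega)
    · rw [if_neg (by omega), if_neg h]
  · rw [a_neg' hi, a_pos' hj,
      show -pd (-i).toNat * mulQ j.toNat - mulQ j.toNat * -pd (-i).toNat
          = -(pd (-i).toNat * mulQ j.toNat - mulQ j.toNat * pd (-i).toNat) from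
        LinearMap.ext fun p => by
          simp only [LinearMap.sub_apply, Module.End.mul_apply, LinearMap.neg_apply, map_neg]
          abel]
    rw [pd_mulQ (-i).toNat j.toNat (by omega) (by omega)]
    by_cases h : i + j = 0
    · rw [if_pos (by omega), if_pos h]
      refine LinearMap.ext fun p => ?_
      show -((((-i).toNat : ℚ)) • p) = (i : ℚ) • p
      rw [← neg_smul]; congr 1
      exact_mod_cast congrArg (Int.cast : ℤ → ℚ) (show -(((-i).toNat : ℤ)) = i by omega)
    · rw [if_neg (by omega), if_neg h, neg_zero]
  · rw [← hj, a_zero', zero_mul, mul_zero, sub_self, if_neg (by omega)]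
  · rw [a_neg' hi, a_neg' hj,
      show -pd (-i).toNat * -pd (-j).toNat - -pd (-j).toNat * -pd (-i).toNat
          = pd (-i).toNat * pd (-j).toNat - pd (-j).toNat * pd (-i).toNat from
        LinearMap.ext fun p => by
          simp only [LinearMap.sub_apply, Module.End.mul_apply, LinearMap.neg_apply, map_neg,
            neg_neg]]
    rw [pd_comm, sub_self, if_neg (by omega)]


lemma term_comm (i j c : ℤ) :
    a i * a j * a c - a c * (a i * a j)
      = (if j + c = 0 then (j : ℚ) • a i else 0)
        + (if i + c = 0 then (i : ℚ) • a j else 0) := by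
  have e1 : a i * a j * a c - a c * (a i * a j)
      = a i * (a j * a c - a c * a j) + (a i * a c - a c * a i) * a j :=
    LinearMap.ext fun p => by
      simp only [Module.End.mul_apply, LinearMap.sub_apply, LinearMap.add_apply, map_sub]
      abel
  rw [e1, a_comm j c, a_comm i c]
  congr 1
  · split_ifs with h
    · exact LinearMap.ext fun p => by
        show a i ((j:ℚ) • p) = (j:ℚ) • a i p
        rw [map_smul]
    · exact LinearMap.ext fun p => by
        show a i (0 : R) = (0 : Module.End ℚ R) p
        simp
  · split_ifs with h
    · exact LinearMap.ext fun p => by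
        show (i:ℚ) • (a j p) = ((i:ℚ) • a j) p
        rfl
    · exact LinearMap.ext fun p => by
        show (0 : Module.End ℚ R) (a j p) = (0 : Module.End ℚ R) p
        rfl

lemma sum_icc_delta (N : ℕ) (c : ℤ) (E : Module.End ℚ R) :
    (∑ k ∈ Finset.Icc 1 N, if (k : ℤ) = c then E else 0)
      = if 1 ≤ c ∧ c ≤ (N : ℤ) then E else 0 := by
  rcases Classical.em (1 ≤ c ∧ c ≤ (N : ℤ)) with hc | hc
  · rw [if_pos hc]
    calc (∑ k ∈ Finset.Icc 1 N, if (k : ℤ) = c then E else 0)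
        = ∑ k ∈ Finset.Icc 1 N, if k = c.toNat then E else 0 :=
          Finset.sum_congr rfl
            (fun k _ => if_congr (show ((k : ℤ) = c) ↔ (k = c.toNat) by omega) rfl rfl)
      _ = E := by
          rw [Finset.sum_ite_eq' (Finset.Icc 1 N) c.toNat (fun _ => E),
            if_pos (by simp only [Finset.mem_Icc]; omega)]
  · rw [if_neg hc]
    exact Finset.sum_eq_zero fun k hk =>
      if_neg (by simp only [Finset.mem_Icc] at hk; omega)

def T (n : ℤ) (N : ℕ) : Module.End ℚ R :=
  if 0 < n then
    (1 / 2 : ℚ) • (∑ i ∈ Finset.Ioo (0 : ℤ) n, a i * a (n - i))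
      + ∑ k ∈ Finset.Icc 1 N, a (n + (k : ℤ)) * a (-(k : ℤ))
  else if n < 0 then
    (1 / 2 : ℚ) • (∑ i ∈ Finset.Ioo (0 : ℤ) (-n), a (-i) * a (n + i))
      + ∑ k ∈ Finset.Icc 1 N, a (k : ℤ) * a (n - (k : ℤ))
  else ∑ k ∈ Finset.Icc 1 N, a (k : ℤ) * a (-(k : ℤ))

lemma pd_helper (k : ℕ) (hk : 0 < k) (p : R) (hv : (⟨k, hk⟩ : ℕ+) ∉ p.vars) :
    (k : ℚ) • pderiv (⟨k, hk⟩ : ℕ+) p = 0 := by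
  rw [pderiv_eq_zero_of_notMem_vars hv, smul_zero]

lemma pd_apply_eq_zero (k : ℕ) (hk : 0 < k) (p : R) (h : bnd p < k) : pd k p = 0 := by
  have hv : (⟨k, hk⟩ : ℕ+) ∉ p.vars := by
    intro hm
    have := Finset.le_sup (f := fun i : ℕ+ => (i : ℕ)) hm
    simp only [PNat.mk_coe] at this
    unfold bnd at h
    omega
  rw [pd, dif_pos hk]
  exact pd_helper k hk p hv

lemma ann (p : R) (j : ℤ) (hj : j < 0) (h : (bnd p : ℤ) < -j) : a j p = 0 := by
  rw [a_neg' hj]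
  show -(pd (-j).toNat p) = 0
  rw [pd_apply_eq_zero (-j).toNat (by omega) p (by omega), neg_zero]


lemma L_eq (n : ℤ) (N : ℕ) (p : R) (h : bnd p ≤ N) : L n p = T n N p := by
  have tail : ∀ (u v : ℕ → ℤ), (∀ k, v k ≤ -(k : ℤ)) →
      ∑ k ∈ Finset.Icc 1 (bnd p), (a (u k) * a (v k)) p
        = ∑ k ∈ Finset.Icc 1 N, (a (u k) * a (v k)) p := by
    intro u v hv
    refine Finset.sum_subset (Finset.Icc_subset_Icc_right h) ?_
    intro k hk1 hk2
    simp only [Finset.mem_Icc] at hk1 hk2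
    rw [Module.End.mul_apply, ann p (v k) (by have := hv k; omega) (by have := hv k; omega),
      map_zero]
  unfold L T
  split_ifs with h1 h2
  · rw [LinearMap.add_apply, LinearMap.smul_apply, LinearMap.sum_apply, LinearMap.sum_apply]
    rw [tail (fun k => n + (k : ℤ)) (fun k => -(k : ℤ)) (fun k => le_refl _)]
  · rw [LinearMap.add_apply, LinearMap.smul_apply, LinearMap.sum_apply, LinearMap.sum_apply]
    rw [tail (fun k => (k : ℤ)) (fun k => n - (k : ℤ)) (fun k => show n - (k:ℤ) ≤ -(k:ℤ) by omega)]
  · rw [LinearMap.sum_apply]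
    rw [tail (fun k => (k : ℤ)) (fun k => -(k : ℤ)) (fun k => le_refl _)]

lemma op_expand (A B C : Module.End ℚ R) :
    ((1/2 : ℚ) • A + B) * C - C * ((1/2 : ℚ) • A + B)
      = (1/2 : ℚ) • (A * C - C * A) + (B * C - C * B) :=
  LinearMap.ext fun p => by
    simp only [Module.End.mul_apply, LinearMap.add_apply, LinearMap.smul_apply,
      LinearMap.sub_apply, map_add, map_smul, map_sub, smul_sub]
    abel

lemma sum_comm_expand {ι : Type*} (s : Finset ι) (f : ι → Module.End ℚ R)
    (C : Module.End ℚ R) :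
    (∑ i ∈ s, f i) * C - C * ∑ i ∈ s, f i = ∑ i ∈ s, (f i * C - C * f i) := by
  rw [Finset.sum_mul, Finset.mul_sum, ← Finset.sum_sub_distrib]

lemma T_comm (n m : ℤ) (N : ℕ) (h3 : m.natAbs ≤ N) (h4 : (n + m).natAbs ≤ N) :
    T n N * a m - a m * T n N = (-(m : ℚ)) • a (n + m) := by
  rcases lt_trichotomy 0 n with hn | hn | hn
  · -- n > 0
    rw [T, if_pos hn, op_expand, sum_comm_expand, sum_comm_expand]
    have step1 : ∀ i ∈ Finset.Ioo (0 : ℤ) n,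
        a i * a (n - i) * a m - a m * (a i * a (n - i))
          = (if i = n + m then (-(m : ℚ)) • a (n + m) else 0)
            + (if i = -m then (-(m : ℚ)) • a (n + m) else 0) := by
      intro i hi
      simp only [Finset.mem_Ioo] at hi
      rw [term_comm]
      congr 1
      · rcases eq_or_ne i (n + m) with h | h
        · subst h
          rw [if_pos (by omega), if_pos rfl]
          congr 1
          all_goals try (congr 1; omega)
          all_goals (push_cast; ring)
        · rw [if_neg (by omega), if_neg h]
      · rcases eq_or_ne i (-m) with h | h
        · subst h
          rw [if_pos (by omega), if_pos rfl]
          congr 1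
          all_goals try (congr 1; omega)
          all_goals (push_cast; ring)
        · rw [if_neg (by omega), if_neg h]
    have step2 : ∀ k ∈ Finset.Icc 1 N,
        a (n + (k : ℤ)) * a (-(k : ℤ)) * a m - a m * (a (n + (k : ℤ)) * a (-(k : ℤ)))
          = (if (k : ℤ) = m then (-(m : ℚ)) • a (n + m) else 0)
            + (if (k : ℤ) = -(n + m) then (-(m : ℚ)) • a (n + m) else 0) := by
      intro k hk
      rw [term_comm]
      congr 1
      · rcases eq_or_ne ((k : ℤ)) m with h | h
        · rw [if_pos (by omega), if_pos h, h]
          congr 1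
          all_goals try (congr 1; omega)
          all_goals (push_cast; ring)
        · rw [if_neg (by omega), if_neg h]
      · rcases eq_or_ne ((k : ℤ)) (-(n + m)) with h | h
        · rw [if_pos (by omega), if_pos h, h]
          congr 1
          all_goals try (congr 1; omega)
          all_goals (push_cast; ring)
        · rw [if_neg (by omega), if_neg h]
    rw [Finset.sum_congr rfl step1, Finset.sum_congr rfl step2, Finset.sum_add_distrib,
      Finset.sum_add_distrib, Finset.sum_ite_eq', Finset.sum_ite_eq', sum_icc_delta,
      sum_icc_delta]
    simp only [Finset.mem_Ioo]
    by_cases h0 : n + m = 0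
    · rw [h0, a_zero']
      simp
    · by_cases hm : m = 0
      · subst hm; simp
      · split_ifs <;> first | module | (exfalso; omega)
  · -- n = 0
    subst hn
    rw [T, if_neg (lt_irrefl 0), if_neg (lt_irrefl 0), sum_comm_expand]
    have step2 : ∀ k ∈ Finset.Icc 1 N,
        a ((k : ℤ)) * a (-(k : ℤ)) * a m - a m * (a ((k : ℤ)) * a (-(k : ℤ)))
          = (if (k : ℤ) = m then (-(m : ℚ)) • a (0 + m) else 0)
            + (if (k : ℤ) = -m then (-(m : ℚ)) • a (0 + m) else 0) := by
      intro k hk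
      rw [term_comm]
      congr 1
      · rcases eq_or_ne ((k : ℤ)) m with h | h
        · rw [if_pos (by omega), if_pos h, h]
          congr 1
          all_goals try (congr 1; omega)
          all_goals (push_cast; ring)
        · rw [if_neg (by omega), if_neg h]
      · rcases eq_or_ne ((k : ℤ)) (-m) with h | h
        · rw [if_pos (by omega), if_pos h, h]
          congr 1
          all_goals try (congr 1; omega)
          all_goals (push_cast; ring)
        · rw [if_neg (by omega), if_neg h]
    rw [Finset.sum_congr rfl step2, Finset.sum_add_distrib, sum_icc_delta, sum_icc_delta]
    by_cases h0 : m = 0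
    · subst h0
      rw [show ((0:ℤ) + 0) = 0 from rfl, a_zero']
      simp
    · by_cases hm : m = 0
      · subst hm; simp
      · split_ifs <;> first | module | (exfalso; omega)
  · -- n < 0
    rw [T, if_neg (by omega), if_pos hn, op_expand, sum_comm_expand, sum_comm_expand]
    have step1 : ∀ i ∈ Finset.Ioo (0 : ℤ) (-n),
        a (-i) * a (n + i) * a m - a m * (a (-i) * a (n + i))
          = (if i = -(n + m) then (-(m : ℚ)) • a (n + m) else 0)
            + (if i = m then (-(m : ℚ)) • a (n + m) else 0) := by
      intro i hi
      simp only [Finset.mem_Ioo] at hi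
      rw [term_comm]
      congr 1
      · rcases eq_or_ne i (-(n + m)) with h | h
        · subst h
          rw [if_pos (by omega), if_pos rfl]
          congr 1
          all_goals try (congr 1; omega)
          all_goals (push_cast; ring)
        · rw [if_neg (by omega), if_neg h]
      · rcases eq_or_ne i m with h | h
        · subst h
          rw [if_pos (by omega), if_pos rfl]
          congr 1
          all_goals try (congr 1; omega)
          all_goals (push_cast; ring)
        · rw [if_neg (by omega), if_neg h]
    have step2 : ∀ k ∈ Finset.Icc 1 N,
        a ((k : ℤ)) * a (n - (k : ℤ)) * a m - a m * (a ((k : ℤ)) * a (n - (k : ℤ)))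
          = (if (k : ℤ) = n + m then (-(m : ℚ)) • a (n + m) else 0)
            + (if (k : ℤ) = -m then (-(m : ℚ)) • a (n + m) else 0) := by
      intro k hk
      rw [term_comm]
      congr 1
      · rcases eq_or_ne ((k : ℤ)) (n + m) with h | h
        · rw [if_pos (by omega), if_pos h, h]
          congr 1
          all_goals try (congr 1; omega)
          all_goals (push_cast; ring)
        · rw [if_neg (by omega), if_neg h]
      · rcases eq_or_ne ((k : ℤ)) (-m) with h | h
        · rw [if_pos (by omega), if_pos h, h]
          congr 1
          all_goals try (congr 1; omega)
          all_goals (push_cast; ring)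
        · rw [if_neg (by omega), if_neg h]
    rw [Finset.sum_congr rfl step1, Finset.sum_congr rfl step2, Finset.sum_add_distrib,
      Finset.sum_add_distrib, Finset.sum_ite_eq', Finset.sum_ite_eq', sum_icc_delta,
      sum_icc_delta]
    simp only [Finset.mem_Ioo]
    by_cases h0 : n + m = 0
    · rw [h0, a_zero']
      simp
    · by_cases hm : m = 0
      · subst hm; simp
      · split_ifs <;> first | module | (exfalso; omega)


/-- Virasoro–Heisenberg commutation: `[Lₙ, aₘ] = −m·a_{n+m}`. -/
theorem virasoro_heisenberg (n m : ℤ) (p : R) :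
    L n (a m p) - a m (L n p) = (-(m : ℚ)) • a (n + m) p := by
  set N := max (bnd p) (bnd (a m p)) + m.natAbs + (n + m).natAbs with hN
  have h1 : bnd p ≤ N := by omega
  have h2 : bnd (a m p) ≤ N := by omega
  rw [L_eq n N (a m p) h2, L_eq n N p h1]
  have key := T_comm n m N (by omega) (by omega)
  have e : T n N (a m p) - a m (T n N p) = (T n N * a m - a m * T n N) p := by
    simp only [LinearMap.sub_apply, Module.End.mul_apply]
  rw [e, key, LinearMap.smul_apply]



end
end

section
/- Fock-space form of Göttsche's formula Σ_n c(L^{[n]}) = exp(Σ_{m≥1} ((−1)^{m−1}/m)·𝔮_m(c(L)))·1: let M₁ : R → R be multiplication by q_1 and D_{1,1} := Σ_{k ≥ 1} (multiplication by q_{1+k}) ∘ ∂_k. Then for every n ≥ 0, (M₁ − D_{1,1})^n applied to the constant polynomial 1 equals n! · Σ_λ ( Π_{i ≥ 1} (1/λ_i!) · ((−1)^{i−1}/i)^{λ_i} ) · Π_{i ≥ 1} q_i^{λ_i}, where the sum runs over all finitely supported λ : {1,2,…} → ℕ with Σ_i i·λ_i = n. -/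
/- Fock space model of Göttsche's formula for the Chern classes of
tautological bundles attached to a line bundle: with `M₁` = multiplication by
`q₁` and `D_{1,1} = Σ_{k≥1} q_{1+k}·∂ₖ` (where `∂ₖ = k·∂/∂qₖ`; the locally
finite sum is realized by truncation), one has
`(M₁ − D_{1,1})ⁿ 1 = n!·Σ_λ (Π_i (1/λᵢ!)·((−1)^{i−1}/i)^{λᵢ})·Π_i qᵢ^{λᵢ}`,
the sum being over all partitions `λ` of `n` (encoded as `Nat.Partition n`,
with `λᵢ` the number of parts equal to `i`). -/

open MvPolynomial

noncomputable section

/-- The operator `D_{n,ν} = Σ_{n₁,…,n_ν ≥ 1} q_{n+n₁+⋯+n_ν}·∂_{n₁}⋯∂_{n_ν}`. -/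
def D (n ν : ℕ) : R → R := fun p =>
  ∑ t ∈ Fintype.piFinset (fun _ : Fin ν => Finset.Icc 1 (bnd p)),
    (mulQ (n + ∑ i, t i) * (List.ofFn fun i => pd (t i)).prod) p

namespace Goettsche

def c (i : ℕ) : ℚ := ((-1 : ℚ) ^ (i - 1)) / i

def cnt {n : ℕ} (P : Nat.Partition n) (i : ℕ) : ℕ := Multiset.count i P.parts

def fs (i k : ℕ) : ℕ+ →₀ ℕ := if h : 0 < i then Finsupp.single ⟨i, h⟩ k else 0

def E (m : ℕ → ℕ) (N : ℕ) : ℕ+ →₀ ℕ := ∑ i ∈ Finset.Icc 1 N, fs i (m i)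

lemma q_pos (k : ℕ) (h : 0 < k) : q k = X (σ := ℕ+) ⟨k, h⟩ := dif_pos h

lemma pd_apply (k : ℕ) (h : 0 < k) (p : R) :
    pd k p = (k : ℚ) • pderiv (σ := ℕ+) ⟨k, h⟩ p := by
  rw [pd, dif_pos h]; rfl

lemma fs_apply (i k : ℕ) (hi : 0 < i) (x : ℕ+) :
    fs i k x = if (x : ℕ) = i then k else 0 := by
  rw [fs, dif_pos hi]
  by_cases hx : (x : ℕ) = i
  · rw [if_pos hx]; subst hx; exact Finsupp.single_eq_same
  · rw [if_neg hx]; exact Finsupp.single_eq_of_ne (fun h => hx (by subst h; rfl))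

lemma E_succ (m : ℕ → ℕ) (N : ℕ) : E m (N + 1) = E m N + fs (N + 1) (m (N + 1)) :=
  Finset.sum_Icc_succ_top (Nat.le_add_left 1 N) _

lemma E_apply (m : ℕ → ℕ) (N : ℕ) (x : ℕ+) :
    E m N x = if (x : ℕ) ≤ N then m x else 0 := by
  induction N with
  | zero => simp [E, Nat.le_zero, (x.pos).ne']
  | succ N ih =>
    rw [E_succ, Finsupp.add_apply, ih, fs_apply _ _ (Nat.succ_pos N)]
    rcases lt_trichotomy ((x : ℕ)) (N + 1) with h | h | h
    · rw [if_pos (Nat.lt_succ_iff.mp h), if_neg (Nat.ne_of_lt h), if_pos (le_of_lt h), add_zero]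
    · rw [if_neg (by omega), if_pos h, if_pos (le_of_eq h), zero_add, h]
    · rw [if_neg (by omega), if_neg (by omega), if_neg (by omega), add_zero]

lemma prod_q_pow (m : ℕ → ℕ) (N : ℕ) :
    ∏ i ∈ Finset.Icc 1 N, q i ^ m i = monomial (E m N) 1 := by
  induction N with
  | zero => simp [E]
  | succ N ih =>
    rw [Finset.prod_Icc_succ_top (Nat.le_add_left 1 N), ih, E_succ,
      q_pos _ (Nat.succ_pos N)]
    erw [X_pow_eq_monomial]
    rw [monomial_mul, one_mul, fs,
      dif_pos (Nat.succ_pos N)]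

lemma pd_eq_zero (p : R) (k : ℕ) (hk : bnd p < k) : pd k p = 0 := by
  rcases Nat.eq_zero_or_pos k with h0 | h0
  · simp [pd, h0]
  · erw [pd_apply k h0, pderiv_eq_zero_of_notMem_vars, smul_zero]
    intro hmem
    have := Finset.le_sup (f := fun i : ℕ+ => (i : ℕ)) hmem
    exact absurd this (by simpa [bnd] using hk.not_ge)

lemma D11_eq (p : R) (N : ℕ) (hN : bnd p ≤ N) :
    D 1 1 p = ∑ k ∈ Finset.Icc 1 N, q (1 + k) * pd k p := by
  rw [D]
  have step : ∑ t ∈ Fintype.piFinset (fun _ : Fin 1 => Finset.Icc 1 (bnd p)),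
      (mulQ (1 + ∑ i, t i) * (List.ofFn fun i => pd (t i)).prod) p
      = ∑ k ∈ Finset.Icc 1 (bnd p), q (1 + k) * pd k p := by
    refine Finset.sum_bij' (fun t _ => t 0) (fun k _ => fun _ : Fin 1 => k) ?_ ?_ ?_ ?_ ?_
    · intro t ht; simpa using (Fintype.mem_piFinset.mp ht) 0
    · intro k hk; simpa [Fintype.mem_piFinset] using hk
    · intro t ht; funext i; exact congrArg t (Subsingleton.elim _ _)
    · intro k hk; rfl
    · intro t ht
      simp [mulQ, Module.End.mul_apply, LinearMap.mulLeft_apply, Fin.sum_univ_one,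
        List.ofFn_succ]
  rw [step]
  refine Finset.sum_subset (Finset.Icc_subset_Icc_right hN) fun k hk hk' => ?_
  have hkb : bnd p < k := by
    simp only [Finset.mem_Icc] at hk hk'
    omega
  rw [pd_eq_zero p k hkb, mul_zero]


def cf {n : ℕ} (N : ℕ) (P : Nat.Partition n) : ℚ :=
  ∏ i ∈ Finset.Icc 1 N,
    (1 : ℚ) / (Nat.factorial (cnt P i)) * c i ^ (cnt P i)

def mn {n : ℕ} (N : ℕ) (P : Nat.Partition n) : R :=
  ∏ i ∈ Finset.Icc 1 N, q i ^ (cnt P i)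

def F (n : ℕ) : R := ∑ P : Nat.Partition n, cf n P • mn n P

lemma cnt_eq_zero {n : ℕ} (P : Nat.Partition n) {i : ℕ} (h : n < i) : cnt P i = 0 := by
  rw [cnt, Multiset.count_eq_zero]
  intro hmem
  exact absurd ((Multiset.le_sum_of_mem hmem).trans_eq P.parts_sum) h.not_ge

lemma cf_ext {n N : ℕ} (h : n ≤ N) (P : Nat.Partition n) : cf N P = cf n P := by
  rw [cf, cf]
  symm
  refine Finset.prod_subset (Finset.Icc_subset_Icc_right h) fun i hi hi' => ?_
  have hni : n < i := by simp only [Finset.mem_Icc] at hi hi'; omega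
  rw [cnt_eq_zero P hni]
  simp

lemma mn_ext {n N : ℕ} (h : n ≤ N) (P : Nat.Partition n) : mn N P = mn n P := by
  rw [mn, mn]
  symm
  refine Finset.prod_subset (Finset.Icc_subset_Icc_right h) fun i hi hi' => ?_
  have hni : n < i := by simp only [Finset.mem_Icc] at hi hi'; omega
  rw [cnt_eq_zero P hni, pow_zero]

lemma D11_smul (a : ℚ) (p : R) : D 1 1 (a • p) = a • D 1 1 p := by
  rw [D11_eq (a • p) (max (bnd (a • p)) (bnd p)) (le_max_left _ _),
      D11_eq p (max (bnd (a • p)) (bnd p)) (le_max_right _ _), Finset.smul_sum]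
  refine Finset.sum_congr rfl fun k _ => ?_
  rw [map_smul, mul_smul_comm]

lemma weight {n : ℕ} (Q : Nat.Partition (n + 1)) :
    ∑ k ∈ Finset.Icc 0 n, (k + 1) * cnt Q (k + 1) = n + 1 := by
  have h1 : ∑ k ∈ Finset.Icc 0 n, (k + 1) * cnt Q (k + 1)
      = ∑ j ∈ Finset.Icc 1 (n + 1), j * cnt Q j := by
    rw [← Finset.map_add_right_Icc 0 n 1, Finset.sum_map]
    rfl
  rw [h1]
  have h2 : ∑ j ∈ Finset.Icc 1 (n + 1), j * cnt Q j
      = ∑ j ∈ Q.parts.toFinset, j * cnt Q j := by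
    symm
    refine Finset.sum_subset ?_ ?_
    · intro a ha
      rw [Multiset.mem_toFinset] at ha
      rw [Finset.mem_Icc]
      exact ⟨Q.parts_pos ha, (Multiset.le_sum_of_mem ha).trans_eq Q.parts_sum⟩
    · intro a _ ha
      rw [Multiset.mem_toFinset] at ha
      rw [cnt, Multiset.count_eq_zero.mpr ha, mul_zero]
  rw [h2]
  conv_rhs => rw [← Q.parts_sum]
  rw [← Multiset.map_id' Q.parts, Finset.sum_multiset_map_count]
  simp [cnt, mul_comm]

lemma c_one : c 1 = 1 := by norm_num [c]

lemma c_succ (k : ℕ) (hk : 0 < k) : ((k : ℚ) + 1) * c (k + 1) = -(k * c k) := by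
  obtain ⟨t, rfl⟩ : ∃ t, k = t + 1 := ⟨k - 1, by omega⟩
  rw [c, c]
  simp only [Nat.add_sub_cancel]
  rw [pow_succ]
  push_cast
  have h1 : (t : ℚ) + 1 ≠ 0 := by positivity
  have h2 : (t : ℚ) + 1 + 1 ≠ 0 := by positivity
  field_simp

lemma fs_pos (k : ℕ) (hk : 0 < k) : fs k 1 = Finsupp.single (⟨k, hk⟩ : ℕ+) 1 := dif_pos hk

lemma q_mul_monomial (k : ℕ) (hk : 0 < k) (u : ℕ+ →₀ ℕ) (a : ℚ) :
    q k * monomial u a = monomial (u + fs k 1) a := by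
  rw [add_comm u (fs k 1), q_pos k hk, fs, dif_pos hk, ← pow_one (X (σ := ℕ+) ⟨k, hk⟩)]
  erw [X_pow_eq_monomial]
  rw [monomial_mul, one_mul]

lemma Dterm {n : ℕ} (P : Nat.Partition n) {k : ℕ} (hk : 0 < k) (a : ℚ) :
    q (1 + k) * (a • pd k (monomial (E (cnt P) (n + 1)) (1 : ℚ)))
      = (a * k * (if k ≤ n + 1 then (cnt P k : ℚ) else 0)) •
          monomial (E (cnt P) (n + 1) - fs k 1 + fs (k + 1) 1) 1 := by
  rw [pd_apply k hk]
  erw [pderiv_monomial]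
  erw [one_mul, smul_smul, mul_smul_comm,
    q_mul_monomial (1 + k) (by omega), ← fs_pos k hk]
  rw [show (1 : ℕ) + k = k + 1 from add_comm 1 k]
  rw [show ((monomial (E (cnt P) (n + 1) - fs k 1 + fs (k + 1) 1))
        (((E (cnt P) (n + 1)) ⟨k, hk⟩ : ℕ) : ℚ))
      = (((E (cnt P) (n + 1)) ⟨k, hk⟩ : ℕ) : ℚ) •
        (monomial (E (cnt P) (n + 1) - fs k 1 + fs (k + 1) 1)) (1 : ℚ) by
    rw [smul_monomial, smul_eq_mul, mul_one]]
  erw [smul_smul, E_apply]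
  push_cast
  ring_nf
  rfl

def A (n : ℕ) : Finset (Nat.Partition n × ℕ) :=
  (Finset.univ ×ˢ Finset.Icc 0 n).filter (fun Pk => Pk.2 = 0 ∨ 0 < cnt Pk.1 Pk.2)

def B (n : ℕ) : Finset (Nat.Partition (n + 1) × ℕ) :=
  (Finset.univ ×ˢ Finset.Icc 0 n).filter (fun Qk => 0 < cnt Qk.1 (Qk.2 + 1))

def Lterm (n : ℕ) : Nat.Partition n × ℕ → R := fun Pk =>
  if Pk.2 = 0 then cf (n + 1) Pk.1 • monomial (E (cnt Pk.1) (n + 1) + fs 1 1) (1 : ℚ)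
  else (-(cf (n + 1) Pk.1 * Pk.2 * cnt Pk.1 Pk.2)) •
    monomial (E (cnt Pk.1) (n + 1) - fs Pk.2 1 + fs (Pk.2 + 1) 1) (1 : ℚ)

def Rterm (n : ℕ) : Nat.Partition (n + 1) × ℕ → R := fun Qk =>
  ((((Qk.2 + 1) * cnt Qk.1 (Qk.2 + 1) : ℕ) : ℚ) * cf (n + 1) Qk.1) •
    monomial (E (cnt Qk.1) (n + 1)) (1 : ℚ)

lemma hF (n : ℕ) : F n = ∑ P : Nat.Partition n, cf (n + 1) P • monomial (E (cnt P) (n + 1)) (1 : ℚ) := by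
  rw [F]
  refine Finset.sum_congr rfl fun P _ => ?_
  rw [← cf_ext (Nat.le_succ n) P, ← mn_ext (Nat.le_succ n) P, mn, prod_q_pow]

lemma lhs_eq (n : ℕ) : q 1 * F n - D 1 1 (F n) = ∑ Pk ∈ A n, Lterm n Pk := by
  have h1 : q 1 * F n = ∑ P : Nat.Partition n, Lterm n (P, 0) := by
    rw [hF, Finset.mul_sum]
    refine Finset.sum_congr rfl fun P _ => ?_
    rw [mul_smul_comm, q_mul_monomial 1 one_pos]
    rfl
  have hD : D 1 1 (F n) = ∑ P : Nat.Partition n, ∑ k ∈ Finset.Icc 1 n,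
      (cf (n + 1) P * k * cnt P k) •
        monomial (E (cnt P) (n + 1) - fs k 1 + fs (k + 1) 1) (1 : ℚ) := by
    rw [D11_eq (F n) (max (n + 1) (bnd (F n))) (le_max_right _ _)]
    have hterm : ∀ k ∈ Finset.Icc 1 (max (n + 1) (bnd (F n))),
        q (1 + k) * pd k (F n) = ∑ P : Nat.Partition n,
          (cf (n + 1) P * k * (if k ≤ n + 1 then (cnt P k : ℚ) else 0)) •
            monomial (E (cnt P) (n + 1) - fs k 1 + fs (k + 1) 1) (1 : ℚ) := by
      intro k hk
      have hk1 : 0 < k := by simp only [Finset.mem_Icc] at hk; omega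
      rw [hF, map_sum, Finset.mul_sum]
      exact Finset.sum_congr rfl fun P _ => by rw [map_smul, Dterm P hk1]
    rw [Finset.sum_congr rfl hterm, Finset.sum_comm]
    refine Finset.sum_congr rfl fun P _ => ?_
    have hzero : ∀ k ∈ Finset.Icc 1 (max (n + 1) (bnd (F n))), k ∉ Finset.Icc 1 n →
        (cf (n + 1) P * k * (if k ≤ n + 1 then (cnt P k : ℚ) else 0)) •
          (monomial (E (cnt P) (n + 1) - fs k 1 + fs (k + 1) 1)) (1 : ℚ) = 0 := by
      intro k hk hk'
      have hkn : n < k := by simp only [Finset.mem_Icc] at hk hk'; omega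
      by_cases hle : k ≤ n + 1
      · rw [if_pos hle, cnt_eq_zero P hkn]
        norm_num
      · rw [if_neg hle]
        norm_num
    rw [← Finset.sum_subset
      (Finset.Icc_subset_Icc_right (le_max_of_le_left (Nat.le_succ n))) hzero]
    refine Finset.sum_congr rfl fun k hk => ?_
    have hle : k ≤ n + 1 := by simp only [Finset.mem_Icc] at hk; omega
    rw [if_pos hle]
  rw [h1, hD, ← Finset.sum_sub_distrib]
  have hsplit : ∀ P : Nat.Partition n,
      Lterm n (P, 0) - (∑ k ∈ Finset.Icc 1 n, (cf (n + 1) P * k * cnt P k) •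
          monomial (E (cnt P) (n + 1) - fs k 1 + fs (k + 1) 1) (1 : ℚ))
        = ∑ k ∈ Finset.Icc 0 n, Lterm n (P, k) := by
    intro P
    rw [show Finset.Icc 0 n = insert 0 (Finset.Icc 1 n) by
      ext x; simp only [Finset.mem_Icc, Finset.mem_insert]; omega]
    rw [Finset.sum_insert (by simp), sub_eq_add_neg, ← Finset.sum_neg_distrib]
    exact congrArg (fun t => Lterm n (P, 0) + t) (Finset.sum_congr rfl fun k hk => by
      have hk0 : k ≠ 0 := by simp only [Finset.mem_Icc] at hk; omega
      simp only [Lterm, if_neg hk0]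
      rw [neg_smul])
  rw [Finset.sum_congr rfl fun P _ => hsplit P, ← Finset.sum_product]
  refine (Finset.sum_filter_of_ne fun x hx hne => ?_).symm
  by_contra hcon
  push_neg at hcon
  obtain ⟨h0, hcnt⟩ := hcon
  apply hne
  simp only [Lterm, if_neg h0]
  rw [Nat.le_zero.mp hcnt]
  norm_num

lemma rhs_eq (n : ℕ) : ((n : ℚ) + 1) • F (n + 1) = ∑ Qk ∈ B n, Rterm n Qk := by
  have hQ : ∀ Q : Nat.Partition (n + 1), ((n : ℚ) + 1) • (cf (n + 1) Q • mn (n + 1) Q)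
      = ∑ k ∈ Finset.Icc 0 n, Rterm n (Q, k) := by
    intro Q
    have hw : ((n : ℚ) + 1) = ∑ k ∈ Finset.Icc 0 n, (((k + 1) * cnt Q (k + 1) : ℕ) : ℚ) := by
      rw [← Nat.cast_sum, weight Q]
      push_cast
      ring
    rw [smul_smul, hw, Finset.sum_mul, Finset.sum_smul]
    refine Finset.sum_congr rfl fun k _ => ?_
    simp only [Rterm]
    rw [mn, prod_q_pow]
  rw [F, Finset.smul_sum, Finset.sum_congr rfl fun Q _ => hQ Q, ← Finset.sum_product]
  refine (Finset.sum_filter_of_ne fun x hx hne => ?_).symm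
  by_contra hcnt
  apply hne
  simp only [Rterm]
  rw [Nat.eq_zero_of_not_pos hcnt]
  norm_num

def addP {n : ℕ} (P : Nat.Partition n) (k : ℕ) (hk : k = 0 ∨ 0 < cnt P k) :
    Nat.Partition (n + 1) where
  parts := (k + 1) ::ₘ P.parts.erase k
  parts_pos := fun {i} hi => by
    rcases Multiset.mem_cons.mp hi with rfl | h
    · omega
    · exact P.parts_pos (Multiset.mem_of_mem_erase h)
  parts_sum := by
    rcases hk with rfl | hpos
    · rw [Multiset.erase_of_notMem (fun h => lt_irrefl 0 (P.parts_pos h)),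
        Multiset.sum_cons, P.parts_sum]
      omega
    · have hmem : k ∈ P.parts := by rwa [cnt, Multiset.count_pos] at hpos
      have hsum : k + (P.parts.erase k).sum = n := by
        rw [← Multiset.sum_cons, Multiset.cons_erase hmem, P.parts_sum]
      rw [Multiset.sum_cons]
      omega

def delP {n : ℕ} (Q : Nat.Partition (n + 1)) (k : ℕ) (hk : 0 < cnt Q (k + 1)) :
    Nat.Partition n where
  parts := if k = 0 then Q.parts.erase 1 else k ::ₘ Q.parts.erase (k + 1)
  parts_pos := fun {i} hi => by
    by_cases h0 : k = 0
    · rw [if_pos h0] at hi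
      exact Q.parts_pos (Multiset.mem_of_mem_erase hi)
    · rw [if_neg h0] at hi
      rcases Multiset.mem_cons.mp hi with rfl | h
      · omega
      · exact Q.parts_pos (Multiset.mem_of_mem_erase h)
  parts_sum := by
    have hmem : (k + 1) ∈ Q.parts := by rwa [cnt, Multiset.count_pos] at hk
    have hsum : (k + 1) + (Q.parts.erase (k + 1)).sum = n + 1 := by
      rw [← Multiset.sum_cons, Multiset.cons_erase hmem, Q.parts_sum]
    by_cases h0 : k = 0
    · subst h0
      rw [if_pos rfl]
      simp only [Nat.zero_add] at hsum
      omega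
    · rw [if_neg h0, Multiset.sum_cons]
      omega

lemma cnt_addP_succ {n : ℕ} (P : Nat.Partition n) (k : ℕ) (hk : k = 0 ∨ 0 < cnt P k) :
    cnt (addP P k hk) (k + 1) = cnt P (k + 1) + 1 := by
  show Multiset.count (k + 1) ((k + 1) ::ₘ P.parts.erase k) = _
  rw [Multiset.count_cons_self, Multiset.count_erase_of_ne (by omega)]
  rfl

lemma cnt_addP_self {n : ℕ} (P : Nat.Partition n) (k : ℕ) (hk : k = 0 ∨ 0 < cnt P k)
    (hkpos : 0 < k) : cnt (addP P k hk) k = cnt P k - 1 := by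
  show Multiset.count k ((k + 1) ::ₘ P.parts.erase k) = _
  rw [Multiset.count_cons_of_ne (by omega), Multiset.count_erase_self]
  rfl

lemma cnt_addP_of_ne {n : ℕ} (P : Nat.Partition n) (k : ℕ) (hk : k = 0 ∨ 0 < cnt P k)
    (i : ℕ) (h1 : i ≠ k) (h2 : i ≠ k + 1) : cnt (addP P k hk) i = cnt P i := by
  show Multiset.count i ((k + 1) ::ₘ P.parts.erase k) = _
  rw [Multiset.count_cons_of_ne h2, Multiset.count_erase_of_ne h1]
  rfl

lemma fact_step (m : ℕ) : (1 : ℚ) / m.factorial = ((m + 1 : ℕ) : ℚ) * (1 / ((m + 1).factorial)) := by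
  rw [Nat.factorial_succ]
  have h1 : ((m.factorial : ℚ)) ≠ 0 := Nat.cast_ne_zero.mpr (Nat.factorial_ne_zero m)
  have h2 : ((m : ℚ) + 1) ≠ 0 := by positivity
  push_cast
  field_simp

lemma scalar_step (k m1 m2 : ℕ) (hk : 0 < k) (hm1 : 0 < m1) :
    -((1 / (m1.factorial : ℚ) * c k ^ m1) * (1 / (m2.factorial : ℚ) * c (k + 1) ^ m2) * k * m1)
      = (((k + 1) * (m2 + 1) : ℕ) : ℚ) *
        ((1 / ((m1 - 1).factorial : ℚ) * c k ^ (m1 - 1)) *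
          (1 / (((m2 + 1).factorial : ℚ)) * c (k + 1) ^ (m2 + 1))) := by
  obtain ⟨b, rfl⟩ : ∃ b, m1 = b + 1 := ⟨m1 - 1, by omega⟩
  have hk1 : ((k : ℚ) + 1) ≠ 0 := by positivity
  have hc2 : c (k + 1) = -((k : ℚ) * c k) / ((k : ℚ) + 1) := by
    rw [eq_div_iff hk1, mul_comm, c_succ k hk]
  simp only [Nat.add_sub_cancel]
  rw [hc2, Nat.factorial_succ b, Nat.factorial_succ m2, pow_succ, pow_succ]
  have hb : ((b.factorial : ℚ)) ≠ 0 := Nat.cast_ne_zero.mpr (Nat.factorial_ne_zero _)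
  have hm : ((m2.factorial : ℚ)) ≠ 0 := Nat.cast_ne_zero.mpr (Nat.factorial_ne_zero _)
  have hb1 : ((b : ℚ) + 1) ≠ 0 := by positivity
  have hm1 : ((m2 : ℚ) + 1) ≠ 0 := by positivity
  push_cast
  field_simp

lemma exp_eq_zero {n : ℕ} (P : Nat.Partition n) (hk : (0 : ℕ) = 0 ∨ 0 < cnt P 0) :
    E (cnt (addP P 0 hk)) (n + 1) = E (cnt P) (n + 1) + fs 1 1 := by
  ext x
  rw [Finsupp.add_apply, E_apply, E_apply, fs_apply 1 1 one_pos]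
  by_cases hx : (x : ℕ) ≤ n + 1
  · rw [if_pos hx, if_pos hx]
    by_cases h1 : (x : ℕ) = 1
    · rw [if_pos h1, h1, cnt_addP_succ P 0 hk]
    · rw [if_neg h1, cnt_addP_of_ne P 0 hk _ (by have := x.pos; omega) (by omega), add_zero]
  · rw [if_neg hx, if_neg hx, if_neg (by omega), add_zero]

lemma exp_eq_pos {n : ℕ} (P : Nat.Partition n) (k : ℕ) (hk : k = 0 ∨ 0 < cnt P k)
    (hkpos : 0 < k) (hkn : k ≤ n) :
    E (cnt (addP P k hk)) (n + 1) = E (cnt P) (n + 1) - fs k 1 + fs (k + 1) 1 := by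
  ext x
  rw [Finsupp.add_apply, Finsupp.tsub_apply, E_apply, E_apply,
    fs_apply k 1 hkpos, fs_apply (k + 1) 1 (by omega)]
  by_cases hx : (x : ℕ) ≤ n + 1
  · rw [if_pos hx, if_pos hx]
    by_cases h1 : (x : ℕ) = k
    · rw [if_pos h1, if_neg (by omega), h1, cnt_addP_self P k hk hkpos, add_zero]
    · by_cases h2 : (x : ℕ) = k + 1
      · rw [if_neg h1, if_pos h2, h2, cnt_addP_succ P k hk, Nat.sub_zero]
      · rw [if_neg h1, if_neg h2, cnt_addP_of_ne P k hk _ h1 h2, Nat.sub_zero, add_zero]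
  · rw [if_neg hx, if_neg hx, if_neg (by omega), if_neg (by omega), add_zero]

lemma coef_eq_zero {n : ℕ} (P : Nat.Partition n) (hk : (0 : ℕ) = 0 ∨ 0 < cnt P 0) :
    cf (n + 1) P = (((0 + 1) * cnt (addP P 0 hk) (0 + 1) : ℕ) : ℚ) * cf (n + 1) (addP P 0 hk) := by
  have h1mem : (1 : ℕ) ∈ Finset.Icc 1 (n + 1) := by simp
  rw [cf, cf, ← Finset.mul_prod_erase _ _ h1mem, ← Finset.mul_prod_erase _ _ h1mem]
  have hrest : (∏ i ∈ (Finset.Icc 1 (n + 1)).erase 1,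
        ((1 : ℚ) / (Nat.factorial (cnt (addP P 0 hk) i)) * c i ^ (cnt (addP P 0 hk) i)))
      = ∏ i ∈ (Finset.Icc 1 (n + 1)).erase 1,
        ((1 : ℚ) / (Nat.factorial (cnt P i)) * c i ^ (cnt P i)) := by
    refine Finset.prod_congr rfl fun i hi => ?_
    have h1 : i ≠ 1 := (Finset.mem_erase.mp hi).1
    have h2 : 1 ≤ i := (Finset.mem_Icc.mp (Finset.mem_erase.mp hi).2).1
    rw [cnt_addP_of_ne P 0 hk i (by omega) (by omega)]
  rw [hrest, cnt_addP_succ P 0 hk]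
  simp only [Nat.zero_add]
  rw [c_one, one_pow, one_pow, fact_step (cnt P 1)]
  push_cast
  ring

lemma coef_eq_pos {n : ℕ} (P : Nat.Partition n) (k : ℕ) (hk : k = 0 ∨ 0 < cnt P k)
    (hkpos : 0 < k) (hkn : k ≤ n) (hcnt : 0 < cnt P k) :
    -(cf (n + 1) P * k * cnt P k)
      = (((k + 1) * cnt (addP P k hk) (k + 1) : ℕ) : ℚ) * cf (n + 1) (addP P k hk) := by
  have hkmem : k ∈ Finset.Icc 1 (n + 1) := by simp only [Finset.mem_Icc]; omega
  have hk1mem : (k + 1) ∈ (Finset.Icc 1 (n + 1)).erase k := by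
    rw [Finset.mem_erase]
    exact ⟨by omega, by simp only [Finset.mem_Icc]; omega⟩
  rw [cf, cf, ← Finset.mul_prod_erase _ _ hkmem, ← Finset.mul_prod_erase _ _ hkmem,
    ← Finset.mul_prod_erase _ _ hk1mem, ← Finset.mul_prod_erase _ _ hk1mem]
  have hrest : (∏ i ∈ ((Finset.Icc 1 (n + 1)).erase k).erase (k + 1),
        ((1 : ℚ) / (Nat.factorial (cnt (addP P k hk) i)) * c i ^ (cnt (addP P k hk) i)))
      = ∏ i ∈ ((Finset.Icc 1 (n + 1)).erase k).erase (k + 1),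
        ((1 : ℚ) / (Nat.factorial (cnt P i)) * c i ^ (cnt P i)) := by
    refine Finset.prod_congr rfl fun i hi => ?_
    have h1 : i ≠ k + 1 := (Finset.mem_erase.mp hi).1
    have h2 : i ≠ k := (Finset.mem_erase.mp (Finset.mem_erase.mp hi).2).1
    rw [cnt_addP_of_ne P k hk i h2 h1]
  rw [hrest, cnt_addP_succ P k hk, cnt_addP_self P k hk hkpos]
  have hs := scalar_step k (cnt P k) (cnt P (k + 1)) hkpos hcnt
  linear_combination (∏ i ∈ ((Finset.Icc 1 (n + 1)).erase k).erase (k + 1),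
    ((1 : ℚ) / (Nat.factorial (cnt P i)) * c i ^ (cnt P i))) * hs

lemma bij (n : ℕ) : ∑ Pk ∈ A n, Lterm n Pk = ∑ Qk ∈ B n, Rterm n Qk := by
  refine Finset.sum_bij' (fun Pk hPk => (addP Pk.1 Pk.2 (Finset.mem_filter.mp hPk).2, Pk.2))
    (fun Qk hQk => (delP Qk.1 Qk.2 (Finset.mem_filter.mp hQk).2, Qk.2)) ?_ ?_ ?_ ?_ ?_
  · intro Pk hPk
    refine Finset.mem_filter.mpr ⟨Finset.mem_product.mpr ⟨Finset.mem_univ _,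
      (Finset.mem_product.mp (Finset.mem_filter.mp hPk).1).2⟩, ?_⟩
    rw [cnt_addP_succ]
    omega
  · intro Qk hQk
    refine Finset.mem_filter.mpr ⟨Finset.mem_product.mpr ⟨Finset.mem_univ _,
      (Finset.mem_product.mp (Finset.mem_filter.mp hQk).1).2⟩, ?_⟩
    by_cases h0 : Qk.2 = 0
    · exact Or.inl h0
    · right
      have hpp : cnt (delP Qk.1 Qk.2 (Finset.mem_filter.mp hQk).2) Qk.2
          = Multiset.count Qk.2 (Qk.2 ::ₘ Qk.1.parts.erase (Qk.2 + 1)) := by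
        rw [cnt]
        show Multiset.count Qk.2 (if Qk.2 = 0 then _ else _) = _
        rw [if_neg h0]
      rw [hpp, Multiset.count_cons_self]
      omega
  · intro Pk hPk
    obtain ⟨P, k⟩ := Pk
    have hcond := (Finset.mem_filter.mp hPk).2
    simp only [Prod.mk.injEq]
    refine ⟨Nat.Partition.ext ?_, trivial⟩
    show (if k = 0 then ((k + 1) ::ₘ P.parts.erase k).erase 1
        else k ::ₘ (((k + 1) ::ₘ P.parts.erase k).erase (k + 1))) = P.parts
    by_cases h0 : k = 0
    · subst h0
      rw [if_pos rfl]
      rw [show (0 : ℕ) + 1 = 1 from rfl, Multiset.erase_cons_head]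
      exact Multiset.erase_of_notMem (fun h => lt_irrefl 0 (P.parts_pos h))
    · rw [if_neg h0, Multiset.erase_cons_head, Multiset.cons_erase]
      rcases hcond with h | h
      · exact absurd h h0
      · rwa [← Multiset.count_pos, ← cnt]
  · intro Qk hQk
    obtain ⟨Q, k⟩ := Qk
    have hcond := (Finset.mem_filter.mp hQk).2
    simp only [Prod.mk.injEq]
    refine ⟨Nat.Partition.ext ?_, trivial⟩
    have hmem : (k + 1) ∈ Q.parts := by rwa [cnt, Multiset.count_pos] at hcond
    show (k + 1) ::ₘ (if k = 0 then Q.parts.erase 1 else k ::ₘ Q.parts.erase (k + 1)).erase k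
        = Q.parts
    by_cases h0 : k = 0
    · subst h0
      rw [if_pos rfl]
      rw [Multiset.erase_of_notMem
        (fun h => lt_irrefl 0 (Q.parts_pos (Multiset.mem_of_mem_erase h)))]
      exact Multiset.cons_erase hmem
    · rw [if_neg h0, Multiset.erase_cons_head]
      exact Multiset.cons_erase hmem
  · intro Pk hPk
    obtain ⟨P, k⟩ := Pk
    have hcond := (Finset.mem_filter.mp hPk).2
    have hkn : k ≤ n := by
      have := (Finset.mem_product.mp (Finset.mem_filter.mp hPk).1).2
      simp only [Finset.mem_Icc] at this
      omega
    simp only [Rterm]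
    by_cases h0 : k = 0
    · subst h0
      show cf (n + 1) P • (monomial (E (cnt P) (n + 1) + fs 1 1)) (1 : ℚ) = _
      rw [← exp_eq_zero P, ← coef_eq_zero P]
    · have hcnt : 0 < cnt P k := by
        rcases hcond with h | h
        · exact absurd h h0
        · exact h
      have hL : Lterm n (P, k) = (-(cf (n + 1) P * k * cnt P k)) •
          (monomial (E (cnt P) (n + 1) - fs k 1 + fs (k + 1) 1)) (1 : ℚ) := by
        simp only [Lterm]
        rw [if_neg h0]
      rw [hL, ← exp_eq_pos P k _ (by omega) hkn,
        ← coef_eq_pos P k _ (by omega) hkn hcnt]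


lemma key (n : ℕ) :
    q 1 * F n - D 1 1 (F n) = ((n : ℚ) + 1) • F (n + 1) := by
  rw [lhs_eq, bij, rhs_eq]

end Goettsche

/-- Göttsche's formula in the Fock model. -/
theorem goettsche_formula_fock (n : ℕ) :
    (fun p : R => q 1 * p - D 1 1 p)^[n] 1
      = (n.factorial : ℚ) • ∑ P : Nat.Partition n,
          (∏ i ∈ Finset.Icc 1 n,
              (1 : ℚ) / (Nat.factorial (Multiset.count i P.parts))
                * (((-1 : ℚ) ^ (i - 1)) / (i : ℚ)) ^ (Multiset.count i P.parts)) •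
            ∏ i ∈ Finset.Icc 1 n, q i ^ (Multiset.count i P.parts) := by
  have main : (fun p : R => q 1 * p - D 1 1 p)^[n] 1 = (n.factorial : ℚ) • Goettsche.F n := by
    induction n with
    | zero => simp [Goettsche.F, Goettsche.cf, Goettsche.mn]
    | succ m ih =>
      rw [Function.iterate_succ_apply', ih]
      show q 1 * ((m.factorial : ℚ) • Goettsche.F m) - D 1 1 ((m.factorial : ℚ) • Goettsche.F m) = _
      rw [Goettsche.D11_smul, mul_smul_comm, ← smul_sub, Goettsche.key m, smul_smul]
      congr 1
      rw [Nat.factorial_succ]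
      push_cast
      ring
  exact main

end
end

section
/- Generation of the cohomology of Hilb^n(𝔸²) by tautological Chern classes, in the Fock-space model: for every n ≥ 1, the smallest ℚ-linear subspace of R that contains q_1^n and is stable under the operator D_{0,m} for every m with 2 ≤ m ≤ n equals the weight-n homogeneous component R_n of R. -/
/- Generation of the cohomology of `Hilb^n(𝔸²)` by tautological Chern classes,
in the Fock model `R = ℚ[q₁,q₂,…]` (variables `qᵢ` of weight `i`): the smallest
`ℚ`-subspace containing `q₁ⁿ` and stable under
`D_{0,m} = Σ_{n₁,…,n_m ≥ 1} q_{n₁+⋯+n_m}·∂_{n₁}⋯∂_{n_m}` for `2 ≤ m ≤ n`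
is the weight-`n` homogeneous component of `R`, i.e. the span of the monomials
`Π qᵢ^{λᵢ}` with `Σ i·λᵢ = n`. -/

open MvPolynomial

noncomputable section

namespace Taut

def pn (s : ℕ) (hs : 0 < s) : ℕ+ := ⟨s, hs⟩

@[simp] lemma pn_coe (s : ℕ) (hs : 0 < s) : (pn s hs : ℕ) = s := rfl

@[simp] lemma pn_one (h : 0 < 1) : pn 1 h = 1 := rfl

def pdP (i : ℕ+) : Module.End ℚ R := (i : ℚ) • (pderiv (R := ℚ) i).toLinearMap

lemma pd_eq (m : ℕ) (h : 0 < m) : pd m = pdP (pn m h) := by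
  simp only [pd, dif_pos h, pdP]; rfl

lemma pdP_monomial (i : ℕ+) (d : ℕ+ →₀ ℕ) (c : ℚ) :
    pdP i (monomial d c)
      = (((i : ℕ) * d i : ℕ) : ℚ) • monomial (d - Finsupp.single i 1) c := by
  simp only [pdP, LinearMap.smul_apply, Derivation.coeFn_coe]
  rw [pderiv_monomial, smul_monomial, smul_monomial]
  rw [smul_eq_mul, smul_eq_mul]
  congr 1
  push_cast
  ring

def Sl (l : List ℕ+) : ℕ+ →₀ ℕ := (l.map fun i => Finsupp.single i 1).sum

@[simp] lemma Sl_nil : Sl [] = 0 := rfl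

@[simp] lemma Sl_cons (i : ℕ+) (l : List ℕ+) : Sl (i :: l) = Finsupp.single i 1 + Sl l := by
  simp [Sl]

def Wt (d : ℕ+ →₀ ℕ) : ℕ := d.sum fun i k => (i : ℕ) * k

@[simp] lemma Wt_zero : Wt 0 = 0 := rfl
def Ln (d : ℕ+ →₀ ℕ) : ℕ := d.sum fun _ k => k

@[simp] lemma Ln_zero : Ln 0 = 0 := rfl
def Mx (d : ℕ+ →₀ ℕ) : ℕ := d.support.sup fun i => (i : ℕ)

@[simp] lemma Wt_add (a b : ℕ+ →₀ ℕ) : Wt (a + b) = Wt a + Wt b := by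
  simp [Wt, Finsupp.sum_add_index', mul_add]

@[simp] lemma Ln_add (a b : ℕ+ →₀ ℕ) : Ln (a + b) = Ln a + Ln b := by
  simp [Ln, Finsupp.sum_add_index']

@[simp] lemma Wt_single (i : ℕ+) (k : ℕ) : Wt (Finsupp.single i k) = (i : ℕ) * k := by
  simp [Wt, Finsupp.sum_single_index]

@[simp] lemma Ln_single (i : ℕ+) (k : ℕ) : Ln (Finsupp.single i k) = k := by
  simp [Ln, Finsupp.sum_single_index]

lemma Wt_tsub {a d : ℕ+ →₀ ℕ} (h : a ≤ d) : Wt (d - a) = Wt d - Wt a := by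
  have := Wt_add (d - a) a
  rw [tsub_add_cancel_of_le h] at this
  omega

lemma Ln_tsub {a d : ℕ+ →₀ ℕ} (h : a ≤ d) : Ln (d - a) = Ln d - Ln a := by
  have := Ln_add (d - a) a
  rw [tsub_add_cancel_of_le h] at this
  omega

lemma Wt_mono {a d : ℕ+ →₀ ℕ} (h : a ≤ d) : Wt a ≤ Wt d := by
  have := Wt_add (d - a) a
  rw [tsub_add_cancel_of_le h] at this
  omega

lemma Ln_le_Wt (d : ℕ+ →₀ ℕ) : Ln d ≤ Wt d := by
  rw [Ln, Wt, Finsupp.sum, Finsupp.sum]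
  refine Finset.sum_le_sum fun i _ => ?_
  exact Nat.le_mul_of_pos_left _ i.pos

lemma Mx_le_Wt (d : ℕ+ →₀ ℕ) : Mx d ≤ Wt d := by
  refine Finset.sup_le fun i hi => ?_
  have h1 : 1 ≤ d i := Nat.one_le_iff_ne_zero.mpr (Finsupp.mem_support_iff.mp hi)
  have h2 : (i : ℕ) * d i ≤ Wt d := by
    rw [Wt, Finsupp.sum]
    exact Finset.single_le_sum (f := fun j : ℕ+ => (j : ℕ) * d j)
      (fun _ _ => Nat.zero_le _) hi
  calc (i : ℕ) ≤ (i : ℕ) * d i := Nat.le_mul_of_pos_right _ h1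
  _ ≤ Wt d := h2

lemma le_Mx {d : ℕ+ →₀ ℕ} {i : ℕ+} (h : i ∈ d.support) : (i : ℕ) ≤ Mx d := Finset.le_sup h

lemma Wt_Sl (l : List ℕ+) : Wt (Sl l) = (l.map PNat.val).sum := by
  induction l with
  | nil => simp
  | cons i l ih => simp [ih]

lemma Ln_Sl (l : List ℕ+) : Ln (Sl l) = l.length := by
  induction l with
  | nil => simp
  | cons i l ih => simp [ih]; omega

lemma prod_pdP (l : List ℕ+) (d : ℕ+ →₀ ℕ) :
    ∃ c : ℚ, ((l.map pdP).prod : Module.End ℚ R) (monomial d (1:ℚ)) = c • monomial (d - Sl l) 1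
      ∧ (Sl l ≤ d → c ≠ 0) ∧ (¬ Sl l ≤ d → c = 0) := by
  induction l with
  | nil =>
    exact ⟨1, by simp, fun _ => one_ne_zero, fun h => absurd (zero_le : 0 ≤ d) h⟩
  | cons i l ih =>
    obtain ⟨c, hc, hne, hz⟩ := ih
    refine ⟨c * (((i : ℕ) * ((d - Sl l) i) : ℕ) : ℚ), ?_, ?_, ?_⟩
    · have key : d - Sl (i :: l) = (d - Sl l) - Finsupp.single i 1 := by
        rw [Sl_cons, add_comm, ← tsub_tsub]
      rw [key]
      simp only [List.map_cons, List.prod_cons, Module.End.mul_apply, hc, map_smul,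
        pdP_monomial]
      rw [smul_smul]
    · intro h
      rw [Sl_cons] at h
      have hl : Sl l ≤ d := le_trans (le_add_self) h
      have hi : 1 ≤ (d - Sl l) i := by
        rw [Finsupp.tsub_apply]
        have := Finsupp.le_def.mp h i
        simp only [Finsupp.add_apply, Finsupp.single_eq_same] at this
        omega
      refine mul_ne_zero (hne hl) ?_
      have : 0 < (i : ℕ) * ((d - Sl l) i) := Nat.mul_pos i.pos hi
      positivity
    · intro h
      rw [Sl_cons] at h
      by_cases hl : Sl l ≤ d
      · have hi : (d - Sl l) i = 0 := by
          by_contra hne0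
          apply h
          rw [Finsupp.le_def]
          intro j
          rw [Finsupp.add_apply]
          rcases eq_or_ne j i with rfl | hji
          · rw [Finsupp.single_eq_same]
            have := Finsupp.tsub_apply d (Sl l) j
            have h2 := Finsupp.le_def.mp hl j
            omega
          · rw [Finsupp.single_eq_of_ne' (Ne.symm hji)]
            simpa using Finsupp.le_def.mp hl j
        rw [hi]
        simp
      · rw [hz hl]
        ring

lemma m_le_sum {m : ℕ} (t : Fin m → ℕ) (ht : ∀ i, 1 ≤ t i) : m ≤ ∑ i, t i := by
  calc m = ∑ _i : Fin m, 1 := by simp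
  _ ≤ ∑ i, t i := Finset.sum_le_sum fun i _ => ht i

lemma term_eq {m : ℕ} (t : Fin m → ℕ) (ht : ∀ i, 1 ≤ t i) (d : ℕ+ →₀ ℕ)
    (hs : 0 < ∑ i, t i) :
    ∃ c : ℚ,
      (mulQ (0 + ∑ i, t i) * (List.ofFn fun i => pd (t i)).prod) (monomial d (1:ℚ))
        = c • monomial (Finsupp.single (pn (∑ i, t i) hs) 1
            + (d - Sl (List.ofFn fun i => pn (t i) (ht i)))) 1
      ∧ (Sl (List.ofFn fun i => pn (t i) (ht i)) ≤ d → c ≠ 0)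
      ∧ (¬ Sl (List.ofFn fun i => pn (t i) (ht i)) ≤ d → c = 0) := by
  obtain ⟨c, hc, hne, hz⟩ := prod_pdP (List.ofFn fun i => pn (t i) (ht i)) d
  refine ⟨c, ?_, hne, hz⟩
  have hofn : (List.ofFn fun i => pd (t i))
      = (List.ofFn fun i => pn (t i) (ht i)).map pdP := by
    rw [List.map_ofFn]
    congr 1
    funext i
    exact pd_eq (t i) (ht i)
  rw [Module.End.mul_apply, hofn, hc, map_smul]
  congr 1
  rw [mulQ, LinearMap.mulLeft_apply, q, zero_add, dif_pos hs]
  rw [show (X (⟨∑ i, t i, hs⟩ : ℕ+) : R)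
      = monomial (Finsupp.single (pn (∑ i, t i) hs) 1) 1 by
    rw [← C_mul_X_eq_monomial, C_1, one_mul]; rfl]
  rw [monomial_mul, one_mul]

lemma Wt_Sl_ofFn {m : ℕ} (t : Fin m → ℕ) (ht : ∀ i, 1 ≤ t i) :
    Wt (Sl (List.ofFn fun i => pn (t i) (ht i))) = ∑ i, t i := by
  rw [Wt_Sl, List.map_ofFn, List.sum_ofFn]
  rfl

lemma Ln_Sl_ofFn {m : ℕ} (t : Fin m → ℕ) (ht : ∀ i, 1 ≤ t i) :
    Ln (Sl (List.ofFn fun i => pn (t i) (ht i))) = m := by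
  rw [Ln_Sl, List.length_ofFn]

lemma D_mem_span (n : ℕ) {m : ℕ} (hm : 2 ≤ m) (p : R)
    (hp : p ∈ Submodule.span ℚ {p : R | ∃ d : ℕ+ →₀ ℕ, Wt d = n ∧ p = monomial d 1}) :
    D 0 m p ∈ Submodule.span ℚ {p : R | ∃ d : ℕ+ →₀ ℕ, Wt d = n ∧ p = monomial d 1} := by
  refine Submodule.sum_mem _ fun t htm => ?_
  have ht : ∀ i, 1 ≤ t i := fun i => (Finset.mem_Icc.mp ((Fintype.mem_piFinset).mp htm i)).1
  have hs : 0 < ∑ i, t i := lt_of_lt_of_le (by omega) (m_le_sum t ht)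
  have hmap : Submodule.span ℚ {p : R | ∃ d : ℕ+ →₀ ℕ, Wt d = n ∧ p = monomial d 1}
      ≤ Submodule.comap (mulQ (0 + ∑ i, t i) * (List.ofFn fun i => pd (t i)).prod)
        (Submodule.span ℚ {p : R | ∃ d : ℕ+ →₀ ℕ, Wt d = n ∧ p = monomial d 1}) := by
    rw [Submodule.span_le]
    rintro _ ⟨d, hd, rfl⟩
    obtain ⟨c, hc, hne, hz⟩ := term_eq t ht d hs
    simp only [Submodule.mem_comap, SetLike.mem_coe, hc]
    by_cases hL : Sl (List.ofFn fun i => pn (t i) (ht i)) ≤ d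
    · refine Submodule.smul_mem _ _ (Submodule.subset_span ?_)
      refine ⟨_, ?_, rfl⟩
      have hWL := Wt_Sl_ofFn t ht
      have hmono := Wt_mono hL
      rw [Wt_add, Wt_single, Wt_tsub hL, hWL]
      simp only [pn_coe]
      omega
    · rw [hz hL, zero_smul]
      exact Submodule.zero_mem _
  exact hmap hp


lemma Ln_mono {a d : ℕ+ →₀ ℕ} (h : a ≤ d) : Ln a ≤ Ln d := by
  have := Ln_add (d - a) a
  rw [tsub_add_cancel_of_le h] at this
  omega

lemma Sl_replicate (k : ℕ) (j : ℕ+) : Sl (List.replicate k j) = Finsupp.single j k := by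
  induction k with
  | zero => simp
  | succ k ih =>
    rw [List.replicate_succ, Sl_cons, ih, ← Finsupp.single_add]
    congr 1
    omega

lemma Sl_ofFn_eq_one {k : ℕ} (f : Fin k → ℕ+) (hf : ∀ i, f i = 1) :
    Sl (List.ofFn f) = Finsupp.single 1 k := by
  have h : List.ofFn f = List.replicate k (1:ℕ+) := by
    rw [show f = fun _ => (1:ℕ+) from funext hf]
    exact List.ofFn_const k 1
  rw [h, Sl_replicate]

lemma gen {n : ℕ} (hn : 1 ≤ n) (V : Submodule ℚ R) (h1 : q 1 ^ n ∈ V)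
    (hst : ∀ m : ℕ, 2 ≤ m → m ≤ n → ∀ p ∈ V, D 0 m p ∈ V) :
    ∀ d : ℕ+ →₀ ℕ, Wt d = n → monomial d (1:ℚ) ∈ V := by
  suffices H : ∀ K : ℕ, ∀ d : ℕ+ →₀ ℕ, Wt d = n →
      (n - Ln d) * (n + 1) + (n - Mx d) ≤ K → monomial d (1:ℚ) ∈ V by
    exact fun d hd => H _ d hd le_rfl
  intro K
  induction K using Nat.strong_induction_on with
  | _ K IH =>
  intro d hd hK
  by_cases hMx : Mx d ≤ 1
  · -- base case : d = single 1 n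
    have hd1 : d = Finsupp.single 1 (d 1) := by
      ext j
      rcases eq_or_ne j 1 with rfl | hj
      · simp
      · rw [Finsupp.single_eq_of_ne' (Ne.symm hj)]
        by_contra hne
        have hjs : j ∈ d.support := Finsupp.mem_support_iff.mpr hne
        have h2 := le_Mx hjs
        have h3 : (j : ℕ) = 1 := le_antisymm (le_trans h2 hMx) j.pos
        exact hj (PNat.coe_injective h3)
    have hdn : d 1 = n := by
      conv at hd => rw [hd1]
      rw [Wt_single] at hd
      simpa using hd
    rw [hd1, hdn, ← X_pow_eq_monomial]
    have hq : q 1 = X (1 : ℕ+) := by rw [q, dif_pos Nat.one_pos]; rfl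
    rwa [hq] at h1
  · push_neg at hMx
    have hsne : d.support.Nonempty := by
      rcases Finset.eq_empty_or_nonempty d.support with h | h
      · exfalso
        have h0 : Mx d = 0 := by
          unfold Mx
          rw [h, Finset.sup_empty]
          rfl
        omega
      · exact h
    obtain ⟨A, hA, hAs⟩ := Finset.exists_mem_eq_sup d.support hsne (fun i => (i : ℕ))
    have hAs' : Mx d = (A : ℕ) := hAs
    have hdA : 1 ≤ d A := Nat.one_le_iff_ne_zero.mpr (Finsupp.mem_support_iff.mp hA)
    have hsA : Finsupp.single A 1 ≤ d := Finsupp.single_le_iff.mpr hdA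
    have hA2 : 2 ≤ (A : ℕ) := by omega
    have hAn : (A : ℕ) ≤ n := by
      have := Mx_le_Wt d
      omega
    set e : ℕ+ →₀ ℕ := (d - Finsupp.single A 1) + Finsupp.single 1 (A : ℕ) with he_def
    have hWsub : Wt (d - Finsupp.single A 1) = n - (A : ℕ) := by
      rw [Wt_tsub hsA, Wt_single, hd, mul_one]
    have hLsub : Ln (d - Finsupp.single A 1) = Ln d - 1 := by
      rw [Ln_tsub hsA, Ln_single]
    have hWe : Wt e = n := by
      rw [he_def, Wt_add, Wt_single, hWsub]
      simp only [PNat.one_coe, one_mul]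
      omega
    have hLd1 : 1 ≤ Ln d := by
      have h2 : Ln (Finsupp.single A 1) ≤ Ln d := Ln_mono hsA
      rw [Ln_single] at h2
      omega
    have hLe : Ln e = Ln d - 1 + (A : ℕ) := by
      rw [he_def, Ln_add, Ln_single, hLsub]
    have hLdn : Ln d < n := by
      have h3 := Ln_le_Wt (d - Finsupp.single A 1)
      rw [hWsub, hLsub] at h3
      omega
    have hmeas_e : (n - Ln e) * (n + 1) + (n - Mx e) < K := by
      have h1' : n - Ln e ≤ n - Ln d - 1 := by omega
      have h2' : (n - Ln e) * (n + 1) ≤ (n - Ln d - 1) * (n + 1) :=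
        Nat.mul_le_mul_right _ h1'
      have h3' : (n - Ln d - 1) * (n + 1) + (n + 1) = (n - Ln d) * (n + 1) := by
        have h4 : n - Ln d - 1 + 1 = n - Ln d := by omega
        conv_rhs => rw [← h4]
        rw [add_one_mul]
      have h4' : n - Mx e ≤ n := by omega
      set P1 := (n - Ln e) * (n + 1)
      set P2 := (n - Ln d - 1) * (n + 1)
      set P3 := (n - Ln d) * (n + 1)
      omega
    have he_mem : monomial e (1:ℚ) ∈ V := IH _ hmeas_e e hWe le_rfl
    have hDe : D 0 (A : ℕ) (monomial e (1:ℚ)) ∈ V := hst (A : ℕ) hA2 hAn _ he_mem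
    have he1 : (A : ℕ) ≤ e 1 := by
      rw [he_def]
      rw [Finsupp.add_apply, Finsupp.single_eq_same]
      omega
    have h1supp : (1 : ℕ+) ∈ e.support := by
      rw [Finsupp.mem_support_iff]
      omega
    have hbnd : 1 ≤ bnd (monomial e (1:ℚ)) := by
      rw [bnd, vars_monomial one_ne_zero]
      exact le_Mx h1supp
    set T := Fintype.piFinset (fun _ : Fin (A : ℕ) => Finset.Icc 1 (bnd (monomial e (1:ℚ))))
      with hT_def
    set F : (Fin (A : ℕ) → ℕ) → R :=
      fun t => (mulQ (0 + ∑ i, t i) * (List.ofFn fun i => pd (t i)).prod) (monomial e (1:ℚ))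
      with hF_def
    have hDsum : D 0 (A : ℕ) (monomial e (1:ℚ)) = ∑ t ∈ T, F t := by
      simp only [hF_def, hT_def]
      rfl
    have ht₀T : (fun _ => 1 : Fin (A : ℕ) → ℕ) ∈ T := by
      rw [hT_def, Fintype.mem_piFinset]
      intro i
      rw [Finset.mem_Icc]
      exact ⟨le_rfl, hbnd⟩
    have hsum_t₀ : (∑ _i : Fin (A:ℕ), 1) = (A : ℕ) := by simp
    have hs₀ : 0 < ∑ _i : Fin (A:ℕ), 1 := by omega
    obtain ⟨c₀, hc₀, hne₀, -⟩ :=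
      term_eq (fun _ => 1 : Fin (A : ℕ) → ℕ) (fun _ => le_rfl) e hs₀
    simp only [pn_one] at hc₀ hne₀
    rw [Sl_ofFn_eq_one (fun _ : Fin (A:ℕ) => (1:ℕ+)) (fun _ => rfl)] at hc₀ hne₀
    have hL₀le : (Finsupp.single 1 (A : ℕ) : ℕ+ →₀ ℕ) ≤ e :=
      Finsupp.single_le_iff.mpr he1
    have hc₀ne : c₀ ≠ 0 := hne₀ hL₀le
    have hpnA : pn (∑ _i : Fin (A:ℕ), 1) hs₀ = A := PNat.coe_injective hsum_t₀
    have hd_eq : (Finsupp.single (pn (∑ _i : Fin (A:ℕ), 1) hs₀) 1 : ℕ+ →₀ ℕ)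
        + (e - Finsupp.single 1 (A : ℕ)) = d := by
      have h2 : e - Finsupp.single 1 (A : ℕ) = d - Finsupp.single A 1 := by
        rw [he_def, add_tsub_cancel_right]
      rw [hpnA, h2, add_tsub_cancel_of_le hsA]
    rw [hd_eq] at hc₀
    have hFt₀ : F (fun _ => 1) = c₀ • monomial d 1 := by
      simp only [hF_def]
      exact hc₀
    have hrest : ∀ t ∈ T.erase (fun _ => 1), F t ∈ V := by
      intro t htmem
      have htT : t ∈ T := Finset.mem_of_mem_erase htmem
      have htne : t ≠ (fun _ => 1) := Finset.ne_of_mem_erase htmem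
      rw [hT_def, Fintype.mem_piFinset] at htT
      have ht1 : ∀ i, 1 ≤ t i := fun i => (Finset.mem_Icc.mp (htT i)).1
      have hsges : (A : ℕ) ≤ ∑ i, t i := m_le_sum t ht1
      have hs' : 0 < ∑ i, t i := by omega
      obtain ⟨c, hc, -, hz⟩ := term_eq t ht1 e hs'
      show F t ∈ V
      simp only [hF_def]
      rw [hc]
      by_cases hL : Sl (List.ofFn fun i => pn (t i) (ht1 i)) ≤ e
      · apply Submodule.smul_mem
        have hWL := Wt_Sl_ofFn t ht1
        have hLnL := Ln_Sl_ofFn t ht1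
        have hsn : ∑ i, t i ≤ n := by
          have := Wt_mono hL
          omega
        have hgt : (A : ℕ) < ∑ i, t i := by
          have hex : ∃ j, t j ≠ 1 := by
            by_contra hall
            push_neg at hall
            exact htne (funext fun i => hall i)
          obtain ⟨j, hj⟩ := hex
          have h5 : ∑ _i : Fin (A:ℕ), (1:ℕ) < ∑ i, t i :=
            Finset.sum_lt_sum (fun i _ => ht1 i) ⟨j, Finset.mem_univ j, by
              have := ht1 j
              omega⟩
          omega
        set ν := (Finsupp.single (pn (∑ i, t i) hs') 1 : ℕ+ →₀ ℕ)
          + (e - Sl (List.ofFn fun i => pn (t i) (ht1 i))) with hν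
        have hWν : Wt ν = n := by
          rw [hν, Wt_add, Wt_single, Wt_tsub hL, hWL]
          simp only [pn_coe]
          omega
        have hLL : Ln (Sl (List.ofFn fun i => pn (t i) (ht1 i))) ≤ Ln e := Ln_mono hL
        have hLν : Ln ν = Ln d := by
          rw [hν, Ln_add, Ln_single, Ln_tsub hL, hLnL]
          rw [hLnL] at hLL
          omega
        have hsupν : pn (∑ i, t i) hs' ∈ ν.support := by
          rw [Finsupp.mem_support_iff, hν, Finsupp.add_apply, Finsupp.single_eq_same]
          omega
        have hMν : ∑ i, t i ≤ Mx ν := by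
          have := le_Mx hsupν
          rw [pn_coe] at this
          exact this
        have hMνn : Mx ν ≤ n := by
          have := Mx_le_Wt ν
          omega
        have hmeasν : (n - Ln ν) * (n + 1) + (n - Mx ν) < K := by
          rw [hLν]
          set P := (n - Ln d) * (n + 1)
          omega
        exact IH _ hmeasν ν hWν le_rfl
      · rw [hz hL, zero_smul]
        exact Submodule.zero_mem _
    have hrestV : ∑ t ∈ T.erase (fun _ => 1), F t ∈ V := Submodule.sum_mem _ hrest
    have hsum_split := Finset.add_sum_erase T F ht₀T
    have hFt₀V : F (fun _ => 1) ∈ V := by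
      have hDe' : ∑ t ∈ T, F t ∈ V := by
        rw [← hDsum]
        exact hDe
      have h6 := Submodule.sub_mem V hDe' hrestV
      rwa [← hsum_split, add_sub_cancel_right] at h6
    rw [hFt₀] at hFt₀V
    have h7 := Submodule.smul_mem V c₀⁻¹ hFt₀V
    rwa [inv_smul_smul₀ hc₀ne] at h7

end Taut

/-- The tautological Chern classes generate the cohomology of `Hilb^n(𝔸²)`. -/
theorem tautological_generation (n : ℕ) (hn : 1 ≤ n) :
    sInf {V : Submodule ℚ R | q 1 ^ n ∈ V ∧
        ∀ m : ℕ, 2 ≤ m → m ≤ n → ∀ p ∈ V, D 0 m p ∈ V}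
      = Submodule.span ℚ {p : R | ∃ d : ℕ+ →₀ ℕ,
          (d.sum fun i k => (i : ℕ) * k) = n ∧ p = monomial d 1} := by
  apply le_antisymm
  · apply sInf_le
    refine ⟨?_, ?_⟩
    · apply Submodule.subset_span
      refine ⟨Finsupp.single 1 n, ?_, ?_⟩
      · show Taut.Wt (Finsupp.single 1 n) = n
        rw [Taut.Wt_single]
        simp
      · rw [show q 1 = X (1:ℕ+) from by rw [q, dif_pos Nat.one_pos]; rfl,
          X_pow_eq_monomial]
    · intro m hm _hmn p hp
      exact Taut.D_mem_span n hm p hp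
  · apply le_sInf
    rintro V ⟨h1, hst⟩
    rw [Submodule.span_le]
    rintro _ ⟨d, hd, rfl⟩
    exact Taut.gen hn V h1 hst d hd

end
end
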